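/- Optimality of the oracle thresholding rule under the two-group model (Proposition 4). Let (θ_i, T_i), i ∈ [m], be i.i.d. pairs on a probability space where θ_i is Bernoulli(π) with 0 < π < 1, and conditional on θ_i = 0 (resp. θ_i = 1) the statistic T_i has Lebesgue density f₀ (resp. f₁ₘ); write f_m = (1−π)f₀ + π f₁ₘ and r_m(t) = 2 f₀(t)/(f₀(t) + f_m(t)). For a measurable decision rule δ : ℝ^m → {0,1}^m applied to T = (T_1,…,T_m), define mFDR_δ = E[ Σ_i (1−θ_i) δ_i(T) ] / E[ Σ_i δ_i(T) ] (assuming E[ Σ_i δ_i(T) ] > 0) and ETP_δ = E[ Σ_i θ_i δ_i(T) ]. Fix α ∈ (0,1) and let 𝓓_α be the class of rules δ with mFDR_δ ≤ α. For λ ∈ (0,1) let δ^R(λ) be the rule with i-th coordinate 1{r_m(T_i) ≤ λ}, let λ^R = sup{ λ : mFDR_{δ^R(λ)} ≤ α }, and let δ^OR = δ^R(λ^R); assume mFDR_{δ^OR} = α. Then δ^OR is optimal: for every δ ∈ 𝓓_α, ETP_δ ≤ ETP_{δ^OR}. -/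

import Mathlib

open MeasureTheory ProbabilityTheory
open scoped Classical

open scoped ENNReal

namespace OracleAux

noncomputable def mixNu (pi : ℝ) (f₀ f₁ : ℝ → ℝ) : Measure (Bool × ℝ) :=
  ENNReal.ofReal (1 - pi) •
    (Measure.dirac false).prod
      ((volume : Measure ℝ).withDensity fun t => ENNReal.ofReal (f₀ t)) +
  ENNReal.ofReal pi •
    (Measure.dirac true).prod
      ((volume : Measure ℝ).withDensity fun t => ENNReal.ofReal (f₁ t))

lemma mixNu_lintegral (pi : ℝ) (f₀ f₁ : ℝ → ℝ)
    (hf₀meas : Measurable f₀) (hf₁meas : Measurable f₁)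
    (G : Bool × ℝ → ℝ≥0∞) (hG : Measurable G) :
    ∫⁻ p, G p ∂(mixNu pi f₀ f₁)
      = ∫⁻ t, (ENNReal.ofReal (1 - pi) * (ENNReal.ofReal (f₀ t) * G (false, t))
          + ENNReal.ofReal pi * (ENNReal.ofReal (f₁ t) * G (true, t))) ∂volume := by
  rw [mixNu, lintegral_add_measure, lintegral_smul_measure, lintegral_smul_measure,
    Measure.dirac_prod, Measure.dirac_prod,
    lintegral_map hG measurable_prodMk_left, lintegral_map hG measurable_prodMk_left,
    lintegral_withDensity_eq_lintegral_mul volume hf₀meas.ennreal_ofReal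
      (show Measurable fun a => G (false, a) from hG.comp measurable_prodMk_left),
    lintegral_withDensity_eq_lintegral_mul volume hf₁meas.ennreal_ofReal
      (show Measurable fun a => G (true, a) from hG.comp measurable_prodMk_left),
    smul_eq_mul, smul_eq_mul,
    ← lintegral_const_mul' _ _ ENNReal.ofReal_ne_top,
    ← lintegral_const_mul' _ _ ENNReal.ofReal_ne_top,
    ← lintegral_add_left]
  · rfl
  · exact (measurable_const.mul (hf₀meas.ennreal_ofReal.mul
      (hG.comp measurable_prodMk_left)))

lemma mixNu_prob (pi : ℝ) (f₀ f₁ : ℝ → ℝ)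
    (hpi0 : 0 ≤ pi) (hpi1 : pi ≤ 1)
    (hf₀nn : ∀ t, 0 ≤ f₀ t) (hf₁nn : ∀ t, 0 ≤ f₁ t)
    (hf₀int : ∫ t, f₀ t = 1) (hf₁int : ∫ t, f₁ t = 1) :
    IsProbabilityMeasure (mixNu pi f₀ f₁) := by
  have hint0 : Integrable f₀ (volume : Measure ℝ) := by
    by_contra h; rw [integral_undef h] at hf₀int; norm_num at hf₀int
  have hint1 : Integrable f₁ (volume : Measure ℝ) := by
    by_contra h; rw [integral_undef h] at hf₁int; norm_num at hf₁int
  have h0 : ((volume : Measure ℝ).withDensity fun t => ENNReal.ofReal (f₀ t)) Set.univ = 1 := by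
    rw [withDensity_apply _ MeasurableSet.univ, setLIntegral_univ,
      ← ofReal_integral_eq_lintegral_ofReal hint0 (Filter.Eventually.of_forall hf₀nn), hf₀int,
      ENNReal.ofReal_one]
  have h1 : ((volume : Measure ℝ).withDensity fun t => ENNReal.ofReal (f₁ t)) Set.univ = 1 := by
    rw [withDensity_apply _ MeasurableSet.univ, setLIntegral_univ,
      ← ofReal_integral_eq_lintegral_ofReal hint1 (Filter.Eventually.of_forall hf₁nn), hf₁int,
      ENNReal.ofReal_one]
  constructor
  rw [mixNu]
  rw [show (Set.univ : Set (Bool × ℝ)) = (Set.univ : Set Bool) ×ˢ (Set.univ : Set ℝ) from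
    (Set.univ_prod_univ).symm]
  simp only [Measure.add_apply, Measure.smul_apply, smul_eq_mul, Measure.prod_prod, h0, h1]
  simp only [measure_univ, one_mul, mul_one]
  rw [← ENNReal.ofReal_add (by linarith) hpi0]
  norm_num

lemma mix_subst (pi : ℝ) (f₀ f₁ : ℝ → ℝ)
    (hf₀meas : Measurable f₀) (hf₁meas : Measurable f₁)
    (hf₀nn : ∀ t, 0 ≤ f₀ t) (hf₁nn : ∀ t, 0 ≤ f₁ t)
    (hpi0 : 0 ≤ pi) (hpi1 : pi ≤ 1)
    (b : Bool) (w : ℝ → ℝ) (hwnn : ∀ t, 0 ≤ w t) (hwmeas : Measurable w)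
    (hw : ∀ t, w t * ((1 - pi) * f₀ t + pi * f₁ t)
        = if b then pi * f₁ t else (1 - pi) * f₀ t)
    (H : ℝ → ℝ≥0∞) (hH : Measurable H) :
    ∫⁻ p, (if p.1 = b then H p.2 else 0) ∂(mixNu pi f₀ f₁)
      = ∫⁻ p, ENNReal.ofReal (w p.2) * H p.2 ∂(mixNu pi f₀ f₁) := by
  have hset : MeasurableSet {p : Bool × ℝ | p.1 = b} :=
    measurable_fst (measurableSet_singleton b)
  have hG1 : Measurable fun p : Bool × ℝ => if p.1 = b then H p.2 else 0 :=
    Measurable.ite hset (hH.comp measurable_snd) measurable_const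
  have hG2 : Measurable fun p : Bool × ℝ => ENNReal.ofReal (w p.2) * H p.2 :=
    ((hwmeas.comp measurable_snd).ennreal_ofReal).mul (hH.comp measurable_snd)
  rw [mixNu_lintegral pi f₀ f₁ hf₀meas hf₁meas _ hG1,
      mixNu_lintegral pi f₀ f₁ hf₀meas hf₁meas _ hG2]
  refine lintegral_congr fun t => ?_
  have h0 : (0:ℝ) ≤ (1 - pi) * f₀ t := mul_nonneg (by linarith) (hf₀nn t)
  have h1 : (0:ℝ) ≤ pi * f₁ t := mul_nonneg hpi0 (hf₁nn t)
  have e0 : ENNReal.ofReal (1 - pi) * ENNReal.ofReal (f₀ t)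
      = ENNReal.ofReal ((1 - pi) * f₀ t) := (ENNReal.ofReal_mul (by linarith)).symm
  have e1 : ENNReal.ofReal pi * ENNReal.ofReal (f₁ t)
      = ENNReal.ofReal (pi * f₁ t) := (ENNReal.ofReal_mul hpi0).symm
  have hkey : (ENNReal.ofReal ((1 - pi) * f₀ t) + ENNReal.ofReal (pi * f₁ t))
        * ENNReal.ofReal (w t)
      = ENNReal.ofReal (if b then pi * f₁ t else (1 - pi) * f₀ t) := by
    rw [← ENNReal.ofReal_add h0 h1, ← ENNReal.ofReal_mul (by positivity), ← hw t, mul_comm]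
  cases b with
  | false =>
    have hkeyf : (ENNReal.ofReal ((1 - pi) * f₀ t) + ENNReal.ofReal (pi * f₁ t))
        * ENNReal.ofReal (w t) = ENNReal.ofReal ((1 - pi) * f₀ t) := by simpa using hkey
    have hrhs : ENNReal.ofReal (1 - pi) * (ENNReal.ofReal (f₀ t) * (ENNReal.ofReal (w t) * H t))
        + ENNReal.ofReal pi * (ENNReal.ofReal (f₁ t) * (ENNReal.ofReal (w t) * H t))
        = ENNReal.ofReal ((1 - pi) * f₀ t) * H t := by
      calc _ = ((ENNReal.ofReal ((1 - pi) * f₀ t) + ENNReal.ofReal (pi * f₁ t))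
            * ENNReal.ofReal (w t)) * H t := by rw [← e0, ← e1]; ring
        _ = _ := by rw [hkeyf]
    rw [hrhs]
    norm_num
    rw [← mul_assoc, e0]
  | true =>
    have hkeyt : (ENNReal.ofReal ((1 - pi) * f₀ t) + ENNReal.ofReal (pi * f₁ t))
        * ENNReal.ofReal (w t) = ENNReal.ofReal (pi * f₁ t) := by simpa using hkey
    have hrhs : ENNReal.ofReal (1 - pi) * (ENNReal.ofReal (f₀ t) * (ENNReal.ofReal (w t) * H t))
        + ENNReal.ofReal pi * (ENNReal.ofReal (f₁ t) * (ENNReal.ofReal (w t) * H t))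
        = ENNReal.ofReal (pi * f₁ t) * H t := by
      calc _ = ((ENNReal.ofReal ((1 - pi) * f₀ t) + ENNReal.ofReal (pi * f₁ t))
            * ENNReal.ofReal (w t)) * H t := by rw [← e0, ← e1]; ring
        _ = _ := by rw [hkeyt]
    rw [hrhs]
    norm_num
    rw [← mul_assoc, e1]

lemma sum_eq_terms {ι : Type*} (s : Finset ι) (u v : ι → ℝ≥0∞)
    (hle : ∀ i ∈ s, v i ≤ u i) (hfin : ∀ i ∈ s, u i ≠ ⊤)
    (hsum : ∑ i ∈ s, u i ≤ ∑ i ∈ s, v i) : ∀ i ∈ s, u i = v i := by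
  classical
  induction s using Finset.induction_on with
  | empty => simp
  | @insert a s hx ih =>
    have hua : u a ≠ ⊤ := hfin a (Finset.mem_insert_self a s)
    have hsufin : ∑ i ∈ s, u i ≠ ⊤ :=
      ENNReal.sum_ne_top.2 fun i hi => hfin i (Finset.mem_insert_of_mem hi)
    have hva : v a ≤ u a := hle a (Finset.mem_insert_self a s)
    have hsv : ∑ i ∈ s, v i ≤ ∑ i ∈ s, u i :=
      Finset.sum_le_sum fun i hi => hle i (Finset.mem_insert_of_mem hi)
    rw [Finset.sum_insert hx, Finset.sum_insert hx] at hsum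
    have h1 : ∑ i ∈ s, u i ≤ ∑ i ∈ s, v i := by
      have : u a + ∑ i ∈ s, u i ≤ u a + ∑ i ∈ s, v i :=
        le_trans hsum (add_le_add_left hva _)
      exact (ENNReal.add_le_add_iff_left hua).1 this
    have h2 : u a ≤ v a := by
      have : u a + ∑ i ∈ s, u i ≤ v a + ∑ i ∈ s, u i :=
        le_trans hsum (add_le_add_right hsv _)
      exact (ENNReal.add_le_add_iff_right hsufin).1 this
    intro i hi
    rcases Finset.mem_insert.1 hi with rfl | hi'
    · exact le_antisymm h2 hva
    · exact ih (fun j hj => hle j (Finset.mem_insert_of_mem hj))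
        (fun j hj => hfin j (Finset.mem_insert_of_mem hj)) h1 i hi'

lemma coord_subst {n : ℕ} (ν : Measure (Bool × ℝ)) [IsProbabilityMeasure ν]
    (b : Bool) (w : ℝ → ℝ≥0∞) (hw : Measurable w)
    (hν : ∀ H : ℝ → ℝ≥0∞, Measurable H →
      ∫⁻ p, (if p.1 = b then H p.2 else 0) ∂ν = ∫⁻ p, w p.2 * H p.2 ∂ν)
    (i : Fin (n + 1)) (G : (Fin (n + 1) → ℝ) → ℝ≥0∞) (hG : Measurable G) :
    ∫⁻ x, (if (x i).1 = b then G (fun k => (x k).2) else 0)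
        ∂(Measure.pi fun _ : Fin (n + 1) => ν)
      = ∫⁻ x, w ((x i).2) * G (fun k => (x k).2)
        ∂(Measure.pi fun _ : Fin (n + 1) => ν) := by
  have mp := measurePreserving_piFinSuccAbove (fun _ : Fin (n + 1) => ν) i
  set e := MeasurableEquiv.piFinSuccAbove (fun _ : Fin (n + 1) => Bool × ℝ) i with he
  have hinner : Measurable fun p : (Bool × ℝ) × (Fin n → Bool × ℝ) =>
      (i.insertNth p.1.2 fun j => (p.2 j).2 : Fin (n + 1) → ℝ) := by
    refine measurable_pi_iff.2 fun k => ?_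
    refine Fin.succAboveCases i ?_ (fun j => ?_) k
    · simpa only [Fin.insertNth_apply_same] using measurable_fst.snd
    · simpa only [Fin.insertNth_apply_succAbove] using
        ((measurable_pi_apply j).comp measurable_snd).snd
  set F₁ : (Bool × ℝ) × (Fin n → Bool × ℝ) → ℝ≥0∞ := fun p =>
    if p.1.1 = b then G (i.insertNth p.1.2 fun j => (p.2 j).2) else 0 with hF₁def
  set F₂ : (Bool × ℝ) × (Fin n → Bool × ℝ) → ℝ≥0∞ := fun p =>
    w p.1.2 * G (i.insertNth p.1.2 fun j => (p.2 j).2) with hF₂def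
  have hF₁ : Measurable F₁ := by
    refine Measurable.ite ?_ (hG.comp hinner) measurable_const
    exact (measurable_fst.comp measurable_fst) (measurableSet_singleton b)
  have hF₂ : Measurable F₂ := (hw.comp measurable_fst.snd).mul (hG.comp hinner)
  have harg : ∀ x : Fin (n + 1) → Bool × ℝ,
      (i.insertNth (x i).2 fun j => (x (i.succAbove j)).2) = fun k => (x k).2 := by
    intro x; funext k
    refine Fin.succAboveCases i ?_ (fun j => ?_) k
    · simp
    · simp
  have h1 : ∀ x : Fin (n + 1) → Bool × ℝ,
      (if (x i).1 = b then G (fun k => (x k).2) else 0) = F₁ (e x) := by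
    intro x
    simp only [hF₁def, he, MeasurableEquiv.piFinSuccAbove_apply, Fin.insertNthEquiv_symm_apply, Fin.removeNth, harg x]
  have h2 : ∀ x : Fin (n + 1) → Bool × ℝ,
      w ((x i).2) * G (fun k => (x k).2) = F₂ (e x) := by
    intro x
    simp only [hF₂def, he, MeasurableEquiv.piFinSuccAbove_apply, Fin.insertNthEquiv_symm_apply, Fin.removeNth, harg x]
  calc ∫⁻ x, (if (x i).1 = b then G (fun k => (x k).2) else 0)
        ∂(Measure.pi fun _ : Fin (n + 1) => ν)
      = ∫⁻ x, F₁ (e x) ∂(Measure.pi fun _ : Fin (n + 1) => ν) := lintegral_congr h1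
    _ = ∫⁻ p, F₁ p ∂(ν.prod (Measure.pi fun _ : Fin n => ν)) := mp.lintegral_comp hF₁
    _ = ∫⁻ z, ∫⁻ a, F₁ (a, z) ∂ν ∂(Measure.pi fun _ : Fin n => ν) :=
        lintegral_prod_symm' F₁ hF₁
    _ = ∫⁻ z, ∫⁻ a, F₂ (a, z) ∂ν ∂(Measure.pi fun _ : Fin n => ν) := by
        refine lintegral_congr fun z => ?_
        exact hν (fun s => G (i.insertNth s fun j => (z j).2))
          (hG.comp (by
            refine measurable_pi_iff.2 fun k => ?_
            refine Fin.succAboveCases i ?_ (fun j => ?_) k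
            · simpa only [Fin.insertNth_apply_same] using measurable_id'
            · simpa only [Fin.insertNth_apply_succAbove] using measurable_const))
    _ = ∫⁻ p, F₂ p ∂(ν.prod (Measure.pi fun _ : Fin n => ν)) :=
        (lintegral_prod_symm' F₂ hF₂).symm
    _ = ∫⁻ x, F₂ (e x) ∂(Measure.pi fun _ : Fin (n + 1) => ν) := (mp.lintegral_comp hF₂).symm
    _ = ∫⁻ x, w ((x i).2) * G (fun k => (x k).2)
        ∂(Measure.pi fun _ : Fin (n + 1) => ν) := lintegral_congr fun x => (h2 x).symm

lemma ind_ne_top {γ : Type*} (C : Set γ) (y : γ) :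
    C.indicator (fun _ => (1:ℝ≥0∞)) y ≠ ⊤ := by
  by_cases h : y ∈ C <;> simp [Set.indicator_apply, h]

lemma ind_le_one {γ : Type*} (C : Set γ) (y : γ) :
    C.indicator (fun _ => (1:ℝ≥0∞)) y ≤ 1 := by
  by_cases h : y ∈ C <;> simp [Set.indicator_apply, h]

end OracleAux

set_option maxHeartbeats 2000000 in
/-- **Optimality of the oracle thresholding rule under the two-group model
(Proposition 4).**
Under the i.i.d. two-group mixture model — `θ i` Bernoulli(π), and given `θ i` the
statistic `T i` has density `f₀` (null) or `f₁ₘ` (alternative) — the oracle rule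
`δ^OR = 1{r_m(T i) ≤ λ^R}`, calibrated so that its mFDR is exactly `α`, maximizes the
expected number of true positives among all decision rules with mFDR at most `α`. -/
theorem oracle_thresholding_optimality
    {Ω : Type*} [MeasurableSpace Ω] (P : Measure Ω) [IsProbabilityMeasure P]
    (m : ℕ) (hm : 1 ≤ m)
    (pi : ℝ) (hpi : pi ∈ Set.Ioo (0 : ℝ) 1)
    (f₀ f₁ : ℝ → ℝ)
    (hf₀meas : Measurable f₀) (hf₁meas : Measurable f₁)
    (hf₀nn : ∀ t, 0 ≤ f₀ t) (hf₁nn : ∀ t, 0 ≤ f₁ t)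
    (hf₀int : ∫ t, f₀ t = 1) (hf₁int : ∫ t, f₁ t = 1)
    (θ : Fin m → Ω → Bool) (T : Fin m → Ω → ℝ)
    (hθmeas : ∀ i, Measurable (θ i)) (hTmeas : ∀ i, Measurable (T i))
    -- the pairs (θ i, T i) are i.i.d. with the two-group mixture law
    (hiid : Measure.map (fun ω => fun i => (θ i ω, T i ω)) P
      = Measure.pi fun _ : Fin m =>
          ENNReal.ofReal (1 - pi) •
            (Measure.dirac false).prod
              ((volume : Measure ℝ).withDensity fun t => ENNReal.ofReal (f₀ t)) +
          ENNReal.ofReal pi •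
            (Measure.dirac true).prod
              ((volume : Measure ℝ).withDensity fun t => ENNReal.ofReal (f₁ t)))
    (α : ℝ) (hα : α ∈ Set.Ioo (0 : ℝ) 1)
    -- the oracle score r_m(t) = 2 f₀(t) / (f₀(t) + f_m(t)), f_m = (1−π) f₀ + π f₁
    (r : ℝ → ℝ)
    (hr : ∀ t, r t = 2 * f₀ t / (f₀ t + ((1 - pi) * f₀ t + pi * f₁ t)))
    -- marginal FDR and expected number of true positives of a decision rule
    (mFDR ETP : ((Fin m → ℝ) → Set (Fin m)) → ℝ)
    (hmFDR : ∀ δ : (Fin m → ℝ) → Set (Fin m), mFDR δ =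
      (∫ ω, ∑ i : Fin m,
          (if θ i ω = false ∧ i ∈ δ (fun k => T k ω) then (1 : ℝ) else 0) ∂P) /
      (∫ ω, ∑ i : Fin m,
          (if i ∈ δ (fun k => T k ω) then (1 : ℝ) else 0) ∂P))
    (hETP : ∀ δ : (Fin m → ℝ) → Set (Fin m), ETP δ =
      ∫ ω, ∑ i : Fin m,
          (if θ i ω = true ∧ i ∈ δ (fun k => T k ω) then (1 : ℝ) else 0) ∂P)
    -- the family of oracle thresholding rules and the calibrated oracle rule
    (δR : ℝ → (Fin m → ℝ) → Set (Fin m))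
    (hδR : ∀ lam t, δR lam t = {i | r (t i) ≤ lam})
    (lamR : ℝ)
    (hlamR : lamR = sSup {lam : ℝ | lam ∈ Set.Ioo (0 : ℝ) 1 ∧ mFDR (δR lam) ≤ α})
    (hOR : mFDR (δR lamR) = α)
    -- an arbitrary competing measurable decision rule with mFDR at most α
    (δ : (Fin m → ℝ) → Set (Fin m))
    (hδmeas : ∀ i, MeasurableSet {t : Fin m → ℝ | i ∈ δ t})
    (hδpos : 0 < ∫ ω, ∑ i : Fin m,
        (if i ∈ δ (fun k => T k ω) then (1 : ℝ) else 0) ∂P)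
    (hδα : mFDR δ ≤ α) :
    ETP δ ≤ ETP (δR lamR) := by

  classical
  obtain ⟨n, rfl⟩ : ∃ n, m = n + 1 := ⟨m - 1, (Nat.succ_pred_eq_of_pos hm).symm⟩
  obtain ⟨hpi0, hpi1⟩ := hpi
  obtain ⟨hα0, hα1⟩ := hα
  -- basic densities
  have hfmnn : ∀ s, 0 ≤ (1 - pi) * f₀ s + pi * f₁ s := fun s =>
    add_nonneg (mul_nonneg (by linarith) (hf₀nn s)) (mul_nonneg hpi0.le (hf₁nn s))
  have hf₀fm : ∀ s, (1 - pi) * f₀ s + pi * f₁ s = 0 → f₀ s = 0 := by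
    intro s h
    have h1 : (1 - pi) * f₀ s = 0 := by
      nlinarith [mul_nonneg (show (0:ℝ) ≤ 1 - pi by linarith) (hf₀nn s),
        mul_nonneg hpi0.le (hf₁nn s)]
    rcases mul_eq_zero.1 h1 with h' | h'
    · linarith
    · exact h'
  have hf₁fm : ∀ s, (1 - pi) * f₀ s + pi * f₁ s = 0 → f₁ s = 0 := by
    intro s h
    have h1 : pi * f₁ s = 0 := by
      nlinarith [mul_nonneg (show (0:ℝ) ≤ 1 - pi by linarith) (hf₀nn s),
        mul_nonneg hpi0.le (hf₁nn s)]
    rcases mul_eq_zero.1 h1 with h' | h'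
    · linarith
    · exact h'
  set Lf : ℝ → ℝ := fun s => (1 - pi) * f₀ s / ((1 - pi) * f₀ s + pi * f₁ s) with hLdef
  have hLnn : ∀ s, 0 ≤ Lf s := fun s =>
    div_nonneg (mul_nonneg (by linarith) (hf₀nn s)) (hfmnn s)
  have hLle1 : ∀ s, Lf s ≤ 1 := by
    intro s
    by_cases h : (1 - pi) * f₀ s + pi * f₁ s = 0
    · rw [hLdef]; simp only []; rw [h, div_zero]; norm_num
    · rw [hLdef]
      exact div_le_one_of_le₀ (by nlinarith [mul_nonneg hpi0.le (hf₁nn s)]) (hfmnn s)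
  have hLmeas : Measurable Lf :=
    (measurable_const.mul hf₀meas).div
      ((measurable_const.mul hf₀meas).add (measurable_const.mul hf₁meas))
  have hLmul : ∀ s, Lf s * ((1 - pi) * f₀ s + pi * f₁ s) = (1 - pi) * f₀ s := by
    intro s
    by_cases h : (1 - pi) * f₀ s + pi * f₁ s = 0
    · rw [h, mul_zero, hf₀fm s h]; ring
    · exact div_mul_cancel₀ _ h
  have hL1mul : ∀ s, (1 - Lf s) * ((1 - pi) * f₀ s + pi * f₁ s) = pi * f₁ s := by
    intro s
    have hexp : (1 - Lf s) * ((1 - pi) * f₀ s + pi * f₁ s)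
        = ((1 - pi) * f₀ s + pi * f₁ s) - Lf s * ((1 - pi) * f₀ s + pi * f₁ s) := by ring
    rw [hexp, hLmul s]; ring
  -- threshold bounds
  have hlam : 0 ≤ lamR ∧ lamR ≤ 1 := by
    by_cases hS : {lam : ℝ | lam ∈ Set.Ioo (0:ℝ) 1 ∧ mFDR (δR lam) ≤ α}.Nonempty
    · have hbdd : BddAbove {lam : ℝ | lam ∈ Set.Ioo (0:ℝ) 1 ∧ mFDR (δR lam) ≤ α} :=
        ⟨1, fun y hy => hy.1.2.le⟩
      obtain ⟨x, hx⟩ := hS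
      constructor
      · rw [hlamR]; exact le_trans hx.1.1.le (le_csSup hbdd hx)
      · rw [hlamR]; exact csSup_le ⟨x, hx⟩ fun y hy => hy.1.2.le
    · rw [hlamR, Set.not_nonempty_iff_eq_empty.1 hS, Real.sSup_empty]; norm_num
  obtain ⟨hlam0, hlam1⟩ := hlam
  have h2lam : (0:ℝ) < 2 - lamR := by linarith
  set c : ℝ := (1 - pi) * lamR / (2 - lamR) with hcdef
  have hcnn : 0 ≤ c := div_nonneg (mul_nonneg (by linarith) hlam0) h2lam.le
  have hclt1 : c < 1 := by
    rw [hcdef, div_lt_one h2lam]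
    have key : (0:ℝ) ≤ (2 - pi) * (1 - lamR) :=
      mul_nonneg (by linarith) (by linarith)
    nlinarith
  have hEquiv : ∀ s, (r s ≤ lamR ↔ Lf s ≤ c) := by
    intro s
    by_cases h : (1 - pi) * f₀ s + pi * f₁ s = 0
    · have h0 : f₀ s = 0 := hf₀fm s h
      have hr0 : r s = 0 := by rw [hr s, h0]; simp
      have hL0 : Lf s = 0 := by rw [hLdef]; simp only []; rw [h0]; simp
      rw [hr0, hL0]
      constructor <;> intro _
      · exact hcnn
      · exact hlam0
    · have hpos : 0 < (1 - pi) * f₀ s + pi * f₁ s := lt_of_le_of_ne (hfmnn s) (Ne.symm h)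
      have hden : 0 < f₀ s + ((1 - pi) * f₀ s + pi * f₁ s) := by nlinarith [hf₀nn s]
      rw [hr s, hLdef]
      simp only []
      rw [div_le_iff₀ hden, hcdef, div_le_div_iff₀ hpos h2lam]
      constructor
      · intro hh
        have h3 : f₀ s * (2 - lamR) ≤ lamR * ((1 - pi) * f₀ s + pi * f₁ s) := by linarith
        nlinarith [mul_le_mul_of_nonneg_left h3 (show (0:ℝ) ≤ 1 - pi by linarith)]
      · intro hh
        have h3 : f₀ s * (2 - lamR) ≤ lamR * ((1 - pi) * f₀ s + pi * f₁ s) := by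
          nlinarith
        linarith
  -- measures
  set ν : Measure (Bool × ℝ) := OracleAux.mixNu pi f₀ f₁ with hνdef
  haveI hνprob : IsProbabilityMeasure ν :=
    OracleAux.mixNu_prob pi f₀ f₁ hpi0.le hpi1.le hf₀nn hf₁nn hf₀int hf₁int
  set Pm : Measure (Fin (n+1) → Bool × ℝ) := Measure.pi fun _ => ν with hPmdef
  haveI hPmprob : IsProbabilityMeasure Pm := by
    rw [hPmdef]; exact MeasureTheory.Measure.pi.instIsProbabilityMeasure _
  set Φ : Ω → Fin (n+1) → Bool × ℝ := fun ω i => (θ i ω, T i ω) with hΦdef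
  have hΦ : Measurable Φ :=
    measurable_pi_lambda _ fun i => (hθmeas i).prodMk (hTmeas i)
  have hiid' : Measure.map Φ P = Pm := hiid
  have hPset : ∀ (S : Set (Fin (n+1) → Bool × ℝ)), MeasurableSet S → P (Φ ⁻¹' S) = Pm S :=
    fun S hS => by rw [← Measure.map_apply hΦ hS, hiid']
  have hsndm : Measurable fun (x : Fin (n+1) → Bool × ℝ) (k : Fin (n+1)) => (x k).2 :=
    measurable_pi_lambda _ fun k => (measurable_pi_apply k).snd
  -- rule sets
  set A : Fin (n+1) → Set (Fin (n+1) → ℝ) := fun i => {t | i ∈ δ t} with hAdef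
  set B : Fin (n+1) → Set (Fin (n+1) → ℝ) := fun i => {t | r (t i) ≤ lamR} with hBdef
  have hAmeas : ∀ i, MeasurableSet (A i) := hδmeas
  have hrmeas : Measurable r := by
    have hre : r = fun t => 2 * f₀ t / (f₀ t + ((1 - pi) * f₀ t + pi * f₁ t)) := funext hr
    rw [hre]
    exact (measurable_const.mul hf₀meas).div
      (hf₀meas.add ((measurable_const.mul hf₀meas).add (measurable_const.mul hf₁meas)))
  have hBmeas : ∀ i, MeasurableSet (B i) := fun i =>
    measurableSet_le (hrmeas.comp (measurable_pi_apply i)) measurable_const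
  -- Bochner bridge
  have hbochner : ∀ (g : Fin (n+1) → Ω → ℝ) (Q : Fin (n+1) → Set Ω),
      (∀ i, MeasurableSet (Q i)) → (∀ i ω, ω ∈ Q i → g i ω = 1) →
      (∀ i ω, ω ∉ Q i → g i ω = 0) →
      ∫ ω, ∑ i, g i ω ∂P = ∑ i, (P (Q i)).toReal := by
    intro g Q hQ h1 h0
    have hg : ∀ i, g i = (Q i).indicator fun _ => (1:ℝ) := by
      intro i; funext ω; by_cases h : ω ∈ Q i
      · rw [h1 i ω h, Set.indicator_of_mem h]
      · rw [h0 i ω h, Set.indicator_of_notMem h]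
    rw [integral_finset_sum _ (fun i _ => by
      rw [hg i]; exact (integrable_const (1:ℝ)).indicator (hQ i))]
    exact Finset.sum_congr rfl fun i _ => by
      rw [hg i, integral_indicator_const (1:ℝ) (hQ i), smul_eq_mul, mul_one]; rfl
  -- set measurability in the product space
  have hS2meas : ∀ (b : Bool) (i : Fin (n+1)) (C : Set (Fin (n+1) → ℝ)), MeasurableSet C →
      MeasurableSet {x : Fin (n+1) → Bool × ℝ | (x i).1 = b ∧ (fun k => (x k).2) ∈ C} := by
    intro b i C hC
    exact (((measurable_pi_apply i).fst) (measurableSet_singleton b)).inter (hsndm hC)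
  -- lintegral representations
  have hindmeas : ∀ (C : Set (Fin (n+1) → ℝ)), MeasurableSet C →
      Measurable fun y : Fin (n+1) → ℝ => C.indicator (fun _ => (1:ℝ≥0∞)) y :=
    fun C hC => measurable_const.indicator hC
  have ER : ∀ (C : Set (Fin (n+1) → ℝ)), MeasurableSet C →
      Pm {x | (fun k => (x k).2) ∈ C}
        = ∫⁻ x, C.indicator (fun _ => (1:ℝ≥0∞)) (fun k => (x k).2) ∂Pm := by
    intro C hC
    have hpre : {x : Fin (n+1) → Bool × ℝ | (fun k => (x k).2) ∈ C}
        = (fun (x : Fin (n+1) → Bool × ℝ) k => (x k).2) ⁻¹' C := rfl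
    rw [hpre, ← lintegral_indicator_one (hsndm hC)]
    refine lintegral_congr fun x => ?_
    by_cases h : (fun k => (x k).2) ∈ C <;> simp [Set.indicator_apply, h, Set.mem_preimage]
  have hsubst : ∀ (b : Bool) (w : ℝ → ℝ), (∀ s, 0 ≤ w s) → Measurable w →
      (∀ s, w s * ((1 - pi) * f₀ s + pi * f₁ s)
        = if b then pi * f₁ s else (1 - pi) * f₀ s) →
      ∀ (i : Fin (n+1)) (C : Set (Fin (n+1) → ℝ)), MeasurableSet C →
      Pm {x | (x i).1 = b ∧ (fun k => (x k).2) ∈ C}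
        = ∫⁻ x, ENNReal.ofReal (w ((x i).2))
            * C.indicator (fun _ => (1:ℝ≥0∞)) (fun k => (x k).2) ∂Pm := by
    intro b w hwnn hwmeas hwmul i C hC
    have h1 : Pm {x | (x i).1 = b ∧ (fun k => (x k).2) ∈ C}
        = ∫⁻ x, (if (x i).1 = b
            then C.indicator (fun _ => (1:ℝ≥0∞)) (fun k => (x k).2) else 0) ∂Pm := by
      rw [← lintegral_indicator_one (hS2meas b i C hC)]
      refine lintegral_congr fun x => ?_
      by_cases hb : (x i).1 = b <;> by_cases hc : (fun k => (x k).2) ∈ C <;>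
        simp [Set.indicator_apply, hb, hc]
    have h2 := OracleAux.coord_subst (n := n) ν b
      (fun s => ENNReal.ofReal (w s)) hwmeas.ennreal_ofReal
      (fun H hH => OracleAux.mix_subst pi f₀ f₁ hf₀meas hf₁meas hf₀nn hf₁nn
        hpi0.le hpi1.le b w hwnn hwmeas hwmul H hH)
      i (fun y => C.indicator (fun _ => (1:ℝ≥0∞)) y) (hindmeas C hC)
    exact h1.trans h2
  have hwmulF : ∀ s, Lf s * ((1 - pi) * f₀ s + pi * f₁ s)
      = if false then pi * f₁ s else (1 - pi) * f₀ s := by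
    intro s; simpa using hLmul s
  have hwmulT : ∀ s, (1 - Lf s) * ((1 - pi) * f₀ s + pi * f₁ s)
      = if true then pi * f₁ s else (1 - pi) * f₀ s := by
    intro s; simpa using hL1mul s
  have EV := hsubst false Lf hLnn hLmeas hwmulF
  have EE := hsubst true (fun s => 1 - Lf s) (fun s => by simpa using sub_nonneg.2 (hLle1 s))
    (measurable_const.sub hLmeas) hwmulT
  -- named quantities
  obtain ⟨VA, hVA⟩ : ∃ g : Fin (n+1) → ℝ≥0∞, ∀ i, g i
      = Pm {x | (x i).1 = false ∧ (fun k => (x k).2) ∈ A i} := ⟨_, fun _ => rfl⟩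
  obtain ⟨EA, hEA⟩ : ∃ g : Fin (n+1) → ℝ≥0∞, ∀ i, g i
      = Pm {x | (x i).1 = true ∧ (fun k => (x k).2) ∈ A i} := ⟨_, fun _ => rfl⟩
  obtain ⟨RA, hRA⟩ : ∃ g : Fin (n+1) → ℝ≥0∞, ∀ i, g i
      = Pm {x | (fun k => (x k).2) ∈ A i} := ⟨_, fun _ => rfl⟩
  obtain ⟨VB, hVB⟩ : ∃ g : Fin (n+1) → ℝ≥0∞, ∀ i, g i
      = Pm {x | (x i).1 = false ∧ (fun k => (x k).2) ∈ B i} := ⟨_, fun _ => rfl⟩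
  obtain ⟨EB, hEB⟩ : ∃ g : Fin (n+1) → ℝ≥0∞, ∀ i, g i
      = Pm {x | (x i).1 = true ∧ (fun k => (x k).2) ∈ B i} := ⟨_, fun _ => rfl⟩
  obtain ⟨RB, hRB⟩ : ∃ g : Fin (n+1) → ℝ≥0∞, ∀ i, g i
      = Pm {x | (fun k => (x k).2) ∈ B i} := ⟨_, fun _ => rfl⟩
  have hVAfin : ∀ i, VA i ≠ ⊤ := fun i => by rw [hVA i]; exact measure_ne_top _ _
  have hEAfin : ∀ i, EA i ≠ ⊤ := fun i => by rw [hEA i]; exact measure_ne_top _ _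
  have hRAfin : ∀ i, RA i ≠ ⊤ := fun i => by rw [hRA i]; exact measure_ne_top _ _
  have hVBfin : ∀ i, VB i ≠ ⊤ := fun i => by rw [hVB i]; exact measure_ne_top _ _
  have hEBfin : ∀ i, EB i ≠ ⊤ := fun i => by rw [hEB i]; exact measure_ne_top _ _
  have hRBfin : ∀ i, RB i ≠ ⊤ := fun i => by rw [hRB i]; exact measure_ne_top _ _
  -- lintegral representations with names
  have EVA : ∀ i, VA i = ∫⁻ x, ENNReal.ofReal (Lf ((x i).2))
      * (A i).indicator (fun _ => (1:ℝ≥0∞)) (fun k => (x k).2) ∂Pm :=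
    fun i => by rw [hVA i]; exact EV i (A i) (hAmeas i)
  have EVB : ∀ i, VB i = ∫⁻ x, ENNReal.ofReal (Lf ((x i).2))
      * (B i).indicator (fun _ => (1:ℝ≥0∞)) (fun k => (x k).2) ∂Pm :=
    fun i => by rw [hVB i]; exact EV i (B i) (hBmeas i)
  have EEA : ∀ i, EA i = ∫⁻ x, ENNReal.ofReal (1 - Lf ((x i).2))
      * (A i).indicator (fun _ => (1:ℝ≥0∞)) (fun k => (x k).2) ∂Pm :=
    fun i => by rw [hEA i]; exact EE i (A i) (hAmeas i)
  have EEB : ∀ i, EB i = ∫⁻ x, ENNReal.ofReal (1 - Lf ((x i).2))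
      * (B i).indicator (fun _ => (1:ℝ≥0∞)) (fun k => (x k).2) ∂Pm :=
    fun i => by rw [hEB i]; exact EE i (B i) (hBmeas i)
  have ERA : ∀ i : Fin (n+1), RA i
      = ∫⁻ x, (A i).indicator (fun _ => (1:ℝ≥0∞)) (fun k => (x k).2) ∂Pm :=
    fun i => by rw [hRA i]; exact ER (A i) (hAmeas i)
  have ERB : ∀ i : Fin (n+1), RB i
      = ∫⁻ x, (B i).indicator (fun _ => (1:ℝ≥0∞)) (fun k => (x k).2) ∂Pm :=
    fun i => by rw [hRB i]; exact ER (B i) (hBmeas i)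
  -- bridging the Bochner integrals
  have hTvec : Measurable fun ω (k : Fin (n+1)) => T k ω :=
    measurable_pi_lambda _ fun k => hTmeas k
  have hnumA : (∫ ω, ∑ i : Fin (n+1),
        (if θ i ω = false ∧ i ∈ δ (fun k => T k ω) then (1:ℝ) else 0) ∂P)
      = ∑ i, (VA i).toReal := by
    refine (hbochner _ (fun i => {ω | θ i ω = false ∧ i ∈ δ (fun k => T k ω)})
      (fun i => ((hθmeas i) (measurableSet_singleton false)).inter (hTvec (hAmeas i)))
      (fun i ω h => if_pos h) (fun i ω h => if_neg h)).trans ?_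
    refine Finset.sum_congr rfl fun i _ => ?_
    rw [hVA i]
    congr 1
    rw [show {ω | θ i ω = false ∧ i ∈ δ (fun k => T k ω)}
        = Φ ⁻¹' {x | (x i).1 = false ∧ (fun k => (x k).2) ∈ A i} from by
      ext ω; simp only [hΦdef, hAdef, Set.mem_preimage, Set.mem_setOf_eq]]
    exact hPset _ (hS2meas false i (A i) (hAmeas i))
  have hetpA : (∫ ω, ∑ i : Fin (n+1),
        (if θ i ω = true ∧ i ∈ δ (fun k => T k ω) then (1:ℝ) else 0) ∂P)
      = ∑ i, (EA i).toReal := by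
    refine (hbochner _ (fun i => {ω | θ i ω = true ∧ i ∈ δ (fun k => T k ω)})
      (fun i => ((hθmeas i) (measurableSet_singleton true)).inter (hTvec (hAmeas i)))
      (fun i ω h => if_pos h) (fun i ω h => if_neg h)).trans ?_
    refine Finset.sum_congr rfl fun i _ => ?_
    rw [hEA i]
    congr 1
    rw [show {ω | θ i ω = true ∧ i ∈ δ (fun k => T k ω)}
        = Φ ⁻¹' {x | (x i).1 = true ∧ (fun k => (x k).2) ∈ A i} from by
      ext ω; simp only [hΦdef, hAdef, Set.mem_preimage, Set.mem_setOf_eq]]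
    exact hPset _ (hS2meas true i (A i) (hAmeas i))
  have hdenA : (∫ ω, ∑ i : Fin (n+1),
        (if i ∈ δ (fun k => T k ω) then (1:ℝ) else 0) ∂P)
      = ∑ i, (RA i).toReal := by
    refine (hbochner _ (fun i => {ω | i ∈ δ (fun k => T k ω)})
      (fun i => hTvec (hAmeas i))
      (fun i ω h => if_pos h) (fun i ω h => if_neg h)).trans ?_
    refine Finset.sum_congr rfl fun i _ => ?_
    rw [hRA i]
    congr 1
    rw [show {ω | i ∈ δ (fun k => T k ω)}
        = Φ ⁻¹' {x | (fun k => (x k).2) ∈ A i} from by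
      ext ω; simp only [hΦdef, hAdef, Set.mem_preimage, Set.mem_setOf_eq]]
    exact hPset _ (hsndm (hAmeas i))
  have hmemB : ∀ (i : Fin (n+1)) ω, (i ∈ δR lamR (fun k => T k ω)) ↔ r (T i ω) ≤ lamR := by
    intro i ω; rw [hδR]; exact Iff.rfl
  have hBsetmeas : ∀ i : Fin (n+1), MeasurableSet {ω | i ∈ δR lamR (fun k => T k ω)} := by
    intro i
    have : {ω | i ∈ δR lamR (fun k => T k ω)} = {ω | r (T i ω) ≤ lamR} := by
      ext ω; exact hmemB i ω
    rw [this]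
    exact measurableSet_le (hrmeas.comp (hTmeas i)) measurable_const
  have hnumB : (∫ ω, ∑ i : Fin (n+1),
        (if θ i ω = false ∧ i ∈ δR lamR (fun k => T k ω) then (1:ℝ) else 0) ∂P)
      = ∑ i, (VB i).toReal := by
    refine (hbochner _ (fun i => {ω | θ i ω = false ∧ i ∈ δR lamR (fun k => T k ω)})
      (fun i => ((hθmeas i) (measurableSet_singleton false)).inter (hBsetmeas i))
      (fun i ω h => if_pos h) (fun i ω h => if_neg h)).trans ?_
    refine Finset.sum_congr rfl fun i _ => ?_
    rw [hVB i]
    congr 1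
    rw [show {ω | θ i ω = false ∧ i ∈ δR lamR (fun k => T k ω)}
        = Φ ⁻¹' {x | (x i).1 = false ∧ (fun k => (x k).2) ∈ B i} from by
      ext ω
      simp only [hΦdef, hBdef, Set.mem_preimage, Set.mem_setOf_eq]
      exact and_congr Iff.rfl (hmemB i ω)]
    exact hPset _ (hS2meas false i (B i) (hBmeas i))
  have hetpB : (∫ ω, ∑ i : Fin (n+1),
        (if θ i ω = true ∧ i ∈ δR lamR (fun k => T k ω) then (1:ℝ) else 0) ∂P)
      = ∑ i, (EB i).toReal := by
    refine (hbochner _ (fun i => {ω | θ i ω = true ∧ i ∈ δR lamR (fun k => T k ω)})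
      (fun i => ((hθmeas i) (measurableSet_singleton true)).inter (hBsetmeas i))
      (fun i ω h => if_pos h) (fun i ω h => if_neg h)).trans ?_
    refine Finset.sum_congr rfl fun i _ => ?_
    rw [hEB i]
    congr 1
    rw [show {ω | θ i ω = true ∧ i ∈ δR lamR (fun k => T k ω)}
        = Φ ⁻¹' {x | (x i).1 = true ∧ (fun k => (x k).2) ∈ B i} from by
      ext ω
      simp only [hΦdef, hBdef, Set.mem_preimage, Set.mem_setOf_eq]
      exact and_congr Iff.rfl (hmemB i ω)]
    exact hPset _ (hS2meas true i (B i) (hBmeas i))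
  have hdenB : (∫ ω, ∑ i : Fin (n+1),
        (if i ∈ δR lamR (fun k => T k ω) then (1:ℝ) else 0) ∂P)
      = ∑ i, (RB i).toReal := by
    refine (hbochner _ (fun i => {ω | i ∈ δR lamR (fun k => T k ω)})
      (fun i => hBsetmeas i)
      (fun i ω h => if_pos h) (fun i ω h => if_neg h)).trans ?_
    refine Finset.sum_congr rfl fun i _ => ?_
    rw [hRB i]
    congr 1
    rw [show {ω | i ∈ δR lamR (fun k => T k ω)}
        = Φ ⁻¹' {x | (fun k => (x k).2) ∈ B i} from by
      ext ω
      simp only [hΦdef, hBdef, Set.mem_preimage, Set.mem_setOf_eq]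
      exact hmemB i ω]
    exact hPset _ (hsndm (hBmeas i))
  -- translate hypotheses into real (in)equalities
  have hRApos : (0:ℝ) < ∑ i, (RA i).toReal := by rw [← hdenA]; exact hδpos
  have hVAle : (∑ i, (VA i).toReal) ≤ α * ∑ i, (RA i).toReal := by
    rw [hmFDR δ, hnumA, hdenA, div_le_iff₀ hRApos] at hδα
    linarith [hδα]
  have hRBnn : (0:ℝ) ≤ ∑ i, (RB i).toReal :=
    Finset.sum_nonneg fun i _ => ENNReal.toReal_nonneg
  have hORr : (∑ i, (VB i).toReal) / (∑ i, (RB i).toReal) = α := by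
    rw [hmFDR (δR lamR), hnumB, hdenB] at hOR; exact hOR
  have hRBpos : (0:ℝ) < ∑ i, (RB i).toReal := by
    rcases lt_or_eq_of_le hRBnn with h | h
    · exact h
    · exfalso; rw [← h, div_zero] at hORr; linarith
  have hVBeq : (∑ i, (VB i).toReal) = α * ∑ i, (RB i).toReal :=
    (div_eq_iff (ne_of_gt hRBpos)).1 hORr
  -- α ≤ c
  have hVBle : ∀ i, (VB i).toReal ≤ c * (RB i).toReal := by
    intro i
    have h1 : VB i ≤ ENNReal.ofReal c * RB i := by
      rw [EVB i, ERB i, ← lintegral_const_mul' _ _ ENNReal.ofReal_ne_top]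
      refine lintegral_mono fun x => ?_
      by_cases h : (fun k => (x k).2) ∈ B i
      · have hLc : Lf ((x i).2) ≤ c := (hEquiv ((x i).2)).1 h
        simp only [Set.indicator_of_mem h, mul_one]
        exact ENNReal.ofReal_le_ofReal hLc
      · simp [Set.indicator_of_notMem h]
    have h2 := ENNReal.toReal_mono
      (ENNReal.mul_ne_top ENNReal.ofReal_ne_top (hRBfin i)) h1
    rwa [ENNReal.toReal_mul, ENNReal.toReal_ofReal hcnn] at h2
  have hαc : α ≤ c := by
    have h1 : (∑ i, (VB i).toReal) ≤ c * ∑ i, (RB i).toReal := by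
      rw [Finset.mul_sum]
      exact Finset.sum_le_sum fun i _ => hVBle i
    rw [hVBeq] at h1
    exact le_of_mul_le_mul_right h1 hRBpos
  -- pointwise membership facts
  have hmemBL : ∀ (i : Fin (n+1)) (x : Fin (n+1) → Bool × ℝ),
      ((fun k => (x k).2) ∈ B i) ↔ Lf ((x i).2) ≤ c := by
    intro i x
    rw [hBdef]
    exact hEquiv ((x i).2)
  -- final goal reduces to sums of EA/EB
  rw [hETP δ, hETP (δR lamR), hetpA, hetpB]
  -- measurability of integrand pieces
  have hIndA : ∀ i : Fin (n+1), Measurable fun x : Fin (n+1) → Bool × ℝ =>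
      (A i).indicator (fun _ => (1:ℝ≥0∞)) (fun k => (x k).2) :=
    fun i => (hindmeas (A i) (hAmeas i)).comp hsndm
  have hIndB : ∀ i : Fin (n+1), Measurable fun x : Fin (n+1) → Bool × ℝ =>
      (B i).indicator (fun _ => (1:ℝ≥0∞)) (fun k => (x k).2) :=
    fun i => (hindmeas (B i) (hBmeas i)).comp hsndm
  have hWT : ∀ i : Fin (n+1), Measurable fun x : Fin (n+1) → Bool × ℝ =>
      ENNReal.ofReal (1 - Lf ((x i).2)) :=
    fun i => ((measurable_const.sub hLmeas).comp ((measurable_pi_apply i).snd)).ennreal_ofReal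
  have hWF : ∀ i : Fin (n+1), Measurable fun x : Fin (n+1) → Bool × ℝ =>
      ENNReal.ofReal (Lf ((x i).2)) :=
    fun i => (hLmeas.comp ((measurable_pi_apply i).snd)).ennreal_ofReal
  -- finiteness of the sums
  have hSEAfin : (∑ i, EA i) ≠ ⊤ := ENNReal.sum_ne_top.2 fun i _ => hEAfin i
  have hSEBfin : (∑ i, EB i) ≠ ⊤ := ENNReal.sum_ne_top.2 fun i _ => hEBfin i
  have hSVAfin : (∑ i, VA i) ≠ ⊤ := ENNReal.sum_ne_top.2 fun i _ => hVAfin i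
  have hSVBfin : (∑ i, VB i) ≠ ⊤ := ENNReal.sum_ne_top.2 fun i _ => hVBfin i
  have hSRAfin : (∑ i, RA i) ≠ ⊤ := ENNReal.sum_ne_top.2 fun i _ => hRAfin i
  have hSRBfin : (∑ i, RB i) ≠ ⊤ := ENNReal.sum_ne_top.2 fun i _ => hRBfin i
  rcases lt_or_eq_of_le hαc with hlt | heq
  · -- case α < c : Lagrangian argument
    set t : ℝ := (1 - c) / (c - α) with htdef
    have ht0 : 0 ≤ t := div_nonneg (by linarith) (by linarith)
    have htc : 1 + t * α = (1 + t) * c := by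
      have hne : c - α ≠ 0 := by linarith
      have h1 : t * (c - α) = 1 - c := by rw [htdef]; exact div_mul_cancel₀ _ hne
      linear_combination -h1
    have master : ∀ i, EA i + ENNReal.ofReal (t*α) * RA i + ENNReal.ofReal t * VB i
        ≤ EB i + ENNReal.ofReal (t*α) * RB i + ENNReal.ofReal t * VA i := by
      intro i
      have hsplit : ∀ (C D : Set (Fin (n+1) → ℝ)), MeasurableSet C → MeasurableSet D →
          ∫⁻ x, (ENNReal.ofReal (1 - Lf ((x i).2))
              * C.indicator (fun _ => (1:ℝ≥0∞)) (fun k => (x k).2)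
            + ENNReal.ofReal (t*α) * C.indicator (fun _ => (1:ℝ≥0∞)) (fun k => (x k).2)
            + ENNReal.ofReal t * (ENNReal.ofReal (Lf ((x i).2))
              * D.indicator (fun _ => (1:ℝ≥0∞)) (fun k => (x k).2))) ∂Pm
          = (∫⁻ x, ENNReal.ofReal (1 - Lf ((x i).2))
              * C.indicator (fun _ => (1:ℝ≥0∞)) (fun k => (x k).2) ∂Pm)
            + ENNReal.ofReal (t*α)
              * (∫⁻ x, C.indicator (fun _ => (1:ℝ≥0∞)) (fun k => (x k).2) ∂Pm)
            + ENNReal.ofReal t * (∫⁻ x, ENNReal.ofReal (Lf ((x i).2))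
              * D.indicator (fun _ => (1:ℝ≥0∞)) (fun k => (x k).2) ∂Pm) := by
        intro C D hC hD
        have hIndC : Measurable fun x : Fin (n+1) → Bool × ℝ =>
            C.indicator (fun _ => (1:ℝ≥0∞)) (fun k => (x k).2) :=
          (hindmeas C hC).comp hsndm
        rw [lintegral_add_left (((hWT i).fun_mul hIndC).fun_add (measurable_const.fun_mul hIndC)),
          lintegral_add_left ((hWT i).fun_mul hIndC),
          lintegral_const_mul' _ _ ENNReal.ofReal_ne_top,
          lintegral_const_mul' _ _ ENNReal.ofReal_ne_top]
      have hL : EA i + ENNReal.ofReal (t*α) * RA i + ENNReal.ofReal t * VB i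
          = ∫⁻ x, (ENNReal.ofReal (1 - Lf ((x i).2))
              * (A i).indicator (fun _ => (1:ℝ≥0∞)) (fun k => (x k).2)
            + ENNReal.ofReal (t*α) * (A i).indicator (fun _ => (1:ℝ≥0∞)) (fun k => (x k).2)
            + ENNReal.ofReal t * (ENNReal.ofReal (Lf ((x i).2))
              * (B i).indicator (fun _ => (1:ℝ≥0∞)) (fun k => (x k).2))) ∂Pm := by
        rw [hsplit (A i) (B i) (hAmeas i) (hBmeas i), EEA i, ERA i, EVB i]
      have hR : EB i + ENNReal.ofReal (t*α) * RB i + ENNReal.ofReal t * VA i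
          = ∫⁻ x, (ENNReal.ofReal (1 - Lf ((x i).2))
              * (B i).indicator (fun _ => (1:ℝ≥0∞)) (fun k => (x k).2)
            + ENNReal.ofReal (t*α) * (B i).indicator (fun _ => (1:ℝ≥0∞)) (fun k => (x k).2)
            + ENNReal.ofReal t * (ENNReal.ofReal (Lf ((x i).2))
              * (A i).indicator (fun _ => (1:ℝ≥0∞)) (fun k => (x k).2))) ∂Pm := by
        rw [hsplit (B i) (A i) (hBmeas i) (hAmeas i), EEB i, ERB i, EVA i]
      rw [hL, hR]
      refine lintegral_mono fun x => ?_
      by_cases hA' : (fun k => (x k).2) ∈ A i <;> by_cases hB' : (fun k => (x k).2) ∈ B i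
      · simp [Set.indicator_of_mem, hA', hB']
      · have hcL : c < Lf ((x i).2) := not_le.1 fun hcon => hB' ((hmemBL i x).2 hcon)
        simp only [Set.indicator_of_mem hA', Set.indicator_of_notMem hB',
          mul_one, mul_zero, add_zero, zero_add]
        rw [← ENNReal.ofReal_mul ht0,
          ← ENNReal.ofReal_add (by linarith [hLle1 ((x i).2)]) (mul_nonneg ht0 hα0.le)]
        refine ENNReal.ofReal_le_ofReal ?_
        nlinarith [mul_le_mul_of_nonneg_left hcL.le (show (0:ℝ) ≤ 1 + t by linarith)]
      · have hLc : Lf ((x i).2) ≤ c := (hmemBL i x).1 hB'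
        simp only [Set.indicator_of_notMem hA', Set.indicator_of_mem hB',
          mul_one, mul_zero, add_zero, zero_add]
        rw [← ENNReal.ofReal_mul ht0,
          ← ENNReal.ofReal_add (by linarith [hLle1 ((x i).2)]) (mul_nonneg ht0 hα0.le)]
        refine ENNReal.ofReal_le_ofReal ?_
        nlinarith [mul_le_mul_of_nonneg_left hLc (show (0:ℝ) ≤ 1 + t by linarith)]
      · simp [Set.indicator_of_notMem, hA', hB']
    have masterSum : (∑ i, EA i) + ENNReal.ofReal (t*α) * (∑ i, RA i)
          + ENNReal.ofReal t * (∑ i, VB i)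
        ≤ (∑ i, EB i) + ENNReal.ofReal (t*α) * (∑ i, RB i)
          + ENNReal.ofReal t * (∑ i, VA i) := by
      rw [Finset.mul_sum, Finset.mul_sum, Finset.mul_sum, Finset.mul_sum,
        ← Finset.sum_add_distrib, ← Finset.sum_add_distrib,
        ← Finset.sum_add_distrib, ← Finset.sum_add_distrib]
      exact Finset.sum_le_sum fun i _ => master i
    have finRA : ENNReal.ofReal (t*α) * (∑ i, RA i) ≠ ⊤ :=
      ENNReal.mul_ne_top ENNReal.ofReal_ne_top hSRAfin
    have finRB : ENNReal.ofReal (t*α) * (∑ i, RB i) ≠ ⊤ :=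
      ENNReal.mul_ne_top ENNReal.ofReal_ne_top hSRBfin
    have finVA : ENNReal.ofReal t * (∑ i, VA i) ≠ ⊤ :=
      ENNReal.mul_ne_top ENNReal.ofReal_ne_top hSVAfin
    have finVB : ENNReal.ofReal t * (∑ i, VB i) ≠ ⊤ :=
      ENNReal.mul_ne_top ENNReal.ofReal_ne_top hSVBfin
    have hfinR := ENNReal.toReal_mono
      (by exact ENNReal.add_ne_top.2 ⟨ENNReal.add_ne_top.2 ⟨hSEBfin, finRB⟩, finVA⟩) masterSum
    rw [ENNReal.toReal_add (ENNReal.add_ne_top.2 ⟨hSEAfin, finRA⟩) finVB,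
      ENNReal.toReal_add hSEAfin finRA,
      ENNReal.toReal_add (ENNReal.add_ne_top.2 ⟨hSEBfin, finRB⟩) finVA,
      ENNReal.toReal_add hSEBfin finRB,
      ENNReal.toReal_mul, ENNReal.toReal_mul, ENNReal.toReal_mul, ENNReal.toReal_mul,
      ENNReal.toReal_ofReal (mul_nonneg ht0 hα0.le), ENNReal.toReal_ofReal ht0,
      ENNReal.toReal_sum (fun i _ => hEAfin i), ENNReal.toReal_sum (fun i _ => hEBfin i),
      ENNReal.toReal_sum (fun i _ => hVAfin i), ENNReal.toReal_sum (fun i _ => hVBfin i),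
      ENNReal.toReal_sum (fun i _ => hRAfin i), ENNReal.toReal_sum (fun i _ => hRBfin i)]
      at hfinR
    have hmul1 : t * (∑ i, (VA i).toReal) ≤ t * (α * ∑ i, (RA i).toReal) :=
      mul_le_mul_of_nonneg_left hVAle ht0
    have e1 : t * (∑ i, (VB i).toReal) = t * (α * ∑ i, (RB i).toReal) := by rw [hVBeq]
    have e2 : (t*α) * (∑ i, (RA i).toReal) = t * (α * ∑ i, (RA i).toReal) := by ring
    have e3 : (t*α) * (∑ i, (RB i).toReal) = t * (α * ∑ i, (RB i).toReal) := by ring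
    linarith [hfinR, hmul1, e1, e2, e3]
  · -- case α = c
    have hvu : ∀ (i : Fin (n+1)) (x : Fin (n+1) → Bool × ℝ),
        ENNReal.ofReal (Lf ((x i).2))
            * (B i).indicator (fun _ => (1:ℝ≥0∞)) (fun k => (x k).2)
          + ENNReal.ofReal α * (A i).indicator (fun _ => (1:ℝ≥0∞)) (fun k => (x k).2)
        ≤ ENNReal.ofReal (Lf ((x i).2))
            * (A i).indicator (fun _ => (1:ℝ≥0∞)) (fun k => (x k).2)
          + ENNReal.ofReal α * (B i).indicator (fun _ => (1:ℝ≥0∞)) (fun k => (x k).2) := by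
      intro i x
      by_cases hA' : (fun k => (x k).2) ∈ A i <;> by_cases hB' : (fun k => (x k).2) ∈ B i
      · simp [Set.indicator_of_mem, hA', hB', add_comm]
      · have hcL : c < Lf ((x i).2) := not_le.1 fun hcon => hB' ((hmemBL i x).2 hcon)
        simp only [Set.indicator_of_mem hA', Set.indicator_of_notMem hB',
          mul_one, mul_zero, add_zero, zero_add]
        exact ENNReal.ofReal_le_ofReal (by linarith)
      · have hLc : Lf ((x i).2) ≤ c := (hmemBL i x).1 hB'
        simp only [Set.indicator_of_notMem hA', Set.indicator_of_mem hB',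
          mul_one, mul_zero, add_zero, zero_add]
        exact ENNReal.ofReal_le_ofReal (by linarith)
      · simp [Set.indicator_of_notMem, hA', hB']
    have hufin : ∀ (i : Fin (n+1)) (x : Fin (n+1) → Bool × ℝ),
        ENNReal.ofReal (Lf ((x i).2))
            * (A i).indicator (fun _ => (1:ℝ≥0∞)) (fun k => (x k).2)
          + ENNReal.ofReal α * (B i).indicator (fun _ => (1:ℝ≥0∞)) (fun k => (x k).2) ≠ ⊤ := by
      intro i x
      exact ENNReal.add_ne_top.2
        ⟨ENNReal.mul_ne_top ENNReal.ofReal_ne_top (OracleAux.ind_ne_top _ _),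
         ENNReal.mul_ne_top ENNReal.ofReal_ne_top (OracleAux.ind_ne_top _ _)⟩
    -- measurability of the u and v summands
    have humeas : ∀ i : Fin (n+1), Measurable fun x : Fin (n+1) → Bool × ℝ =>
        ENNReal.ofReal (Lf ((x i).2))
            * (A i).indicator (fun _ => (1:ℝ≥0∞)) (fun k => (x k).2)
          + ENNReal.ofReal α * (B i).indicator (fun _ => (1:ℝ≥0∞)) (fun k => (x k).2) :=
      fun i => ((hWF i).mul (hIndA i)).add (measurable_const.mul (hIndB i))
    have hvmeas : ∀ i : Fin (n+1), Measurable fun x : Fin (n+1) → Bool × ℝ =>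
        ENNReal.ofReal (Lf ((x i).2))
            * (B i).indicator (fun _ => (1:ℝ≥0∞)) (fun k => (x k).2)
          + ENNReal.ofReal α * (A i).indicator (fun _ => (1:ℝ≥0∞)) (fun k => (x k).2) :=
      fun i => ((hWF i).mul (hIndB i)).add (measurable_const.mul (hIndA i))
    -- integral of each summand
    have hUi : ∀ i : Fin (n+1),
        ∫⁻ x, (ENNReal.ofReal (Lf ((x i).2))
            * (A i).indicator (fun _ => (1:ℝ≥0∞)) (fun k => (x k).2)
          + ENNReal.ofReal α * (B i).indicator (fun _ => (1:ℝ≥0∞)) (fun k => (x k).2)) ∂Pm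
        = VA i + ENNReal.ofReal α * RB i := by
      intro i
      rw [lintegral_add_left ((hWF i).fun_mul (hIndA i)),
        lintegral_const_mul' _ _ ENNReal.ofReal_ne_top, ← EVA i, ← ERB i]
    have hVi : ∀ i : Fin (n+1),
        ∫⁻ x, (ENNReal.ofReal (Lf ((x i).2))
            * (B i).indicator (fun _ => (1:ℝ≥0∞)) (fun k => (x k).2)
          + ENNReal.ofReal α * (A i).indicator (fun _ => (1:ℝ≥0∞)) (fun k => (x k).2)) ∂Pm
        = VB i + ENNReal.ofReal α * RA i := by
      intro i
      rw [lintegral_add_left ((hWF i).fun_mul (hIndB i)),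
        lintegral_const_mul' _ _ ENNReal.ofReal_ne_top, ← EVB i, ← ERA i]
    -- aggregated integrals
    have hUint : ∫⁻ x, (∑ i, (ENNReal.ofReal (Lf ((x i).2))
            * (A i).indicator (fun _ => (1:ℝ≥0∞)) (fun k => (x k).2)
          + ENNReal.ofReal α * (B i).indicator (fun _ => (1:ℝ≥0∞)) (fun k => (x k).2))) ∂Pm
        = (∑ i, VA i) + ENNReal.ofReal α * (∑ i, RB i) := by
      rw [lintegral_finset_sum _ fun i _ => humeas i]
      rw [Finset.mul_sum, ← Finset.sum_add_distrib]
      exact Finset.sum_congr rfl fun i _ => hUi i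
    have hVint : ∫⁻ x, (∑ i, (ENNReal.ofReal (Lf ((x i).2))
            * (B i).indicator (fun _ => (1:ℝ≥0∞)) (fun k => (x k).2)
          + ENNReal.ofReal α * (A i).indicator (fun _ => (1:ℝ≥0∞)) (fun k => (x k).2))) ∂Pm
        = (∑ i, VB i) + ENNReal.ofReal α * (∑ i, RA i) := by
      rw [lintegral_finset_sum _ fun i _ => hvmeas i]
      rw [Finset.mul_sum, ← Finset.sum_add_distrib]
      exact Finset.sum_congr rfl fun i _ => hVi i
    -- comparison of aggregated ENNReal quantities via the real hypotheses
    have finXa : ENNReal.ofReal α * (∑ i, RB i) ≠ ⊤ :=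
      ENNReal.mul_ne_top ENNReal.ofReal_ne_top hSRBfin
    have finYa : ENNReal.ofReal α * (∑ i, RA i) ≠ ⊤ :=
      ENNReal.mul_ne_top ENNReal.ofReal_ne_top hSRAfin
    have finX : (∑ i, VA i) + ENNReal.ofReal α * (∑ i, RB i) ≠ ⊤ :=
      ENNReal.add_ne_top.2 ⟨hSVAfin, finXa⟩
    have finY : (∑ i, VB i) + ENNReal.ofReal α * (∑ i, RA i) ≠ ⊤ :=
      ENNReal.add_ne_top.2 ⟨hSVBfin, finYa⟩
    have hXY : (∑ i, VA i) + ENNReal.ofReal α * (∑ i, RB i)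
        ≤ (∑ i, VB i) + ENNReal.ofReal α * (∑ i, RA i) := by
      refine (ENNReal.toReal_le_toReal finX finY).1 ?_
      rw [ENNReal.toReal_add hSVAfin finXa, ENNReal.toReal_add hSVBfin finYa,
        ENNReal.toReal_mul, ENNReal.toReal_mul, ENNReal.toReal_ofReal hα0.le,
        ENNReal.toReal_sum (fun i _ => hVAfin i), ENNReal.toReal_sum (fun i _ => hVBfin i),
        ENNReal.toReal_sum (fun i _ => hRAfin i), ENNReal.toReal_sum (fun i _ => hRBfin i)]
      linarith [hVAle, hVBeq]
    have hIntUleV : ∫⁻ x, (∑ i, (ENNReal.ofReal (Lf ((x i).2))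
            * (A i).indicator (fun _ => (1:ℝ≥0∞)) (fun k => (x k).2)
          + ENNReal.ofReal α * (B i).indicator (fun _ => (1:ℝ≥0∞)) (fun k => (x k).2))) ∂Pm
        ≤ ∫⁻ x, (∑ i, (ENNReal.ofReal (Lf ((x i).2))
            * (B i).indicator (fun _ => (1:ℝ≥0∞)) (fun k => (x k).2)
          + ENNReal.ofReal α * (A i).indicator (fun _ => (1:ℝ≥0∞)) (fun k => (x k).2))) ∂Pm := by
      rw [hUint, hVint]; exact hXY
    have hIntVleU : ∫⁻ x, (∑ i, (ENNReal.ofReal (Lf ((x i).2))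
            * (B i).indicator (fun _ => (1:ℝ≥0∞)) (fun k => (x k).2)
          + ENNReal.ofReal α * (A i).indicator (fun _ => (1:ℝ≥0∞)) (fun k => (x k).2))) ∂Pm
        ≤ ∫⁻ x, (∑ i, (ENNReal.ofReal (Lf ((x i).2))
            * (A i).indicator (fun _ => (1:ℝ≥0∞)) (fun k => (x k).2)
          + ENNReal.ofReal α * (B i).indicator (fun _ => (1:ℝ≥0∞)) (fun k => (x k).2))) ∂Pm :=
      lintegral_mono fun x => Finset.sum_le_sum fun i _ => hvu i x
    have hUmeas : Measurable fun x : Fin (n+1) → Bool × ℝ =>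
        ∑ i, (ENNReal.ofReal (Lf ((x i).2))
            * (A i).indicator (fun _ => (1:ℝ≥0∞)) (fun k => (x k).2)
          + ENNReal.ofReal α * (B i).indicator (fun _ => (1:ℝ≥0∞)) (fun k => (x k).2)) :=
      Finset.measurable_sum _ fun i _ => humeas i
    have hVmeas : Measurable fun x : Fin (n+1) → Bool × ℝ =>
        ∑ i, (ENNReal.ofReal (Lf ((x i).2))
            * (B i).indicator (fun _ => (1:ℝ≥0∞)) (fun k => (x k).2)
          + ENNReal.ofReal α * (A i).indicator (fun _ => (1:ℝ≥0∞)) (fun k => (x k).2)) :=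
      Finset.measurable_sum _ fun i _ => hvmeas i
    have hVfinInt : (∫⁻ x, (∑ i, (ENNReal.ofReal (Lf ((x i).2))
            * (B i).indicator (fun _ => (1:ℝ≥0∞)) (fun k => (x k).2)
          + ENNReal.ofReal α * (A i).indicator (fun _ => (1:ℝ≥0∞)) (fun k => (x k).2))) ∂Pm)
        ≠ ⊤ := by rw [hVint]; exact finY
    have hsub0 : ∫⁻ x, ((∑ i, (ENNReal.ofReal (Lf ((x i).2))
            * (A i).indicator (fun _ => (1:ℝ≥0∞)) (fun k => (x k).2)
          + ENNReal.ofReal α * (B i).indicator (fun _ => (1:ℝ≥0∞)) (fun k => (x k).2)))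
        - (∑ i, (ENNReal.ofReal (Lf ((x i).2))
            * (B i).indicator (fun _ => (1:ℝ≥0∞)) (fun k => (x k).2)
          + ENNReal.ofReal α * (A i).indicator (fun _ => (1:ℝ≥0∞)) (fun k => (x k).2)))) ∂Pm
        = 0 := by
      rw [lintegral_sub hVmeas hVfinInt
        (Filter.Eventually.of_forall fun x => Finset.sum_le_sum fun i _ => hvu i x)]
      exact tsub_eq_zero_of_le hIntUleV
    have haeq : ∀ᵐ x ∂Pm, (∑ i, (ENNReal.ofReal (Lf ((x i).2))
            * (A i).indicator (fun _ => (1:ℝ≥0∞)) (fun k => (x k).2)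
          + ENNReal.ofReal α * (B i).indicator (fun _ => (1:ℝ≥0∞)) (fun k => (x k).2)))
        = (∑ i, (ENNReal.ofReal (Lf ((x i).2))
            * (B i).indicator (fun _ => (1:ℝ≥0∞)) (fun k => (x k).2)
          + ENNReal.ofReal α * (A i).indicator (fun _ => (1:ℝ≥0∞)) (fun k => (x k).2))) := by
      have h := (lintegral_eq_zero_iff (hUmeas.sub hVmeas)).1 hsub0
      filter_upwards [h] with x hx
      have hle : (∑ i, (ENNReal.ofReal (Lf ((x i).2))
            * (A i).indicator (fun _ => (1:ℝ≥0∞)) (fun k => (x k).2)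
          + ENNReal.ofReal α * (B i).indicator (fun _ => (1:ℝ≥0∞)) (fun k => (x k).2)))
          ≤ (∑ i, (ENNReal.ofReal (Lf ((x i).2))
            * (B i).indicator (fun _ => (1:ℝ≥0∞)) (fun k => (x k).2)
          + ENNReal.ofReal α * (A i).indicator (fun _ => (1:ℝ≥0∞)) (fun k => (x k).2))) :=
        tsub_eq_zero_iff_le.1 hx
      exact le_antisymm hle (Finset.sum_le_sum fun i _ => hvu i x)
    have hterm : ∀ᵐ x ∂Pm, ∀ i : Fin (n+1),
        ENNReal.ofReal (Lf ((x i).2))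
            * (A i).indicator (fun _ => (1:ℝ≥0∞)) (fun k => (x k).2)
          + ENNReal.ofReal α * (B i).indicator (fun _ => (1:ℝ≥0∞)) (fun k => (x k).2)
        = ENNReal.ofReal (Lf ((x i).2))
            * (B i).indicator (fun _ => (1:ℝ≥0∞)) (fun k => (x k).2)
          + ENNReal.ofReal α * (A i).indicator (fun _ => (1:ℝ≥0∞)) (fun k => (x k).2) := by
      filter_upwards [haeq] with x hx i
      exact OracleAux.sum_eq_terms Finset.univ _ _ (fun j _ => hvu j x)
        (fun j _ => hufin j x) (le_of_eq hx) i (Finset.mem_univ i)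
    have hfinalae : ∀ᵐ x ∂Pm, ∀ i : Fin (n+1),
        ENNReal.ofReal (1 - Lf ((x i).2))
            * (A i).indicator (fun _ => (1:ℝ≥0∞)) (fun k => (x k).2)
        ≤ ENNReal.ofReal (1 - Lf ((x i).2))
            * (B i).indicator (fun _ => (1:ℝ≥0∞)) (fun k => (x k).2) := by
      filter_upwards [hterm] with x hx i
      by_cases hA' : (fun k => (x k).2) ∈ A i <;> by_cases hB' : (fun k => (x k).2) ∈ B i
      · simp [Set.indicator_of_mem, hA', hB']
      · exfalso
        have hcL : c < Lf ((x i).2) := not_le.1 fun hcon => hB' ((hmemBL i x).2 hcon)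
        have hx' := hx i
        rw [Set.indicator_of_mem hA', Set.indicator_of_notMem hB'] at hx'
        simp only [mul_one, mul_zero, add_zero, zero_add] at hx'
        have : Lf ((x i).2) = α :=
          (ENNReal.ofReal_eq_ofReal_iff (hLnn _) hα0.le).1 hx'
        linarith
      · simp only [Set.indicator_of_notMem hA', Set.indicator_of_mem hB', mul_zero, mul_one]
        exact zero_le
      · simp [Set.indicator_of_notMem, hA', hB']
    have hEi : ∀ i, EA i ≤ EB i := by
      intro i
      rw [EEA i, EEB i]
      refine lintegral_mono_ae ?_
      filter_upwards [hfinalae] with x hx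
      exact hx i
    exact Finset.sum_le_sum fun i _ => ENNReal.toReal_mono (hEBfin i) (hEi i)
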